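/- Let h₁, h₂ : (0,∞) → [0,∞) be integrable with ∫₀^∞ h₁ = ∫₀^∞ h₂ = 1, and let H_i(x) := ∫_x^∞ h_i, E := H₁ - H₂. Then for all x > 0, (h₁*H₁ - h₂*H₂)(x) = (h₁+h₂)*E(x) - E(x), where f*g(x) := ∫₀^x f(x_*) g(x-x_*) dx_* denotes convolution on (0,∞). -/

import Mathlib

open MeasureTheory Set Filter Real
open scoped Topology

namespace ConvDiffAux

/-- The cumulative function of the indicator extension. -/
noncomputable def G (h : ℝ → ℝ) (t : ℝ) : ℝ := ∫ z in Iio t, (Ioi (0:ℝ)).indicator h z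

lemma indInt {h : ℝ → ℝ} (hint : IntegrableOn h (Ioi 0)) :
    Integrable ((Ioi (0:ℝ)).indicator h) :=
  hint.integrable_indicator measurableSet_Ioi

lemma G_eq_Ioo (h : ℝ → ℝ) (t : ℝ) : G h t = ∫ z in Ioo 0 t, h z := by
  rw [G, setIntegral_indicator measurableSet_Ioi, Iio_inter_Ioi]

lemma G_eq_interval (h : ℝ → ℝ) (hint : IntegrableOn h (Ioi 0)) (t : ℝ) :
    G h t = ∫ z in (0:ℝ)..t, (Ioi (0:ℝ)).indicator h z := by
  rcases le_or_gt 0 t with ht | ht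
  · rw [intervalIntegral.integral_of_le ht, setIntegral_indicator measurableSet_Ioi,
      inter_eq_left.mpr Ioc_subset_Ioi_self, integral_Ioc_eq_integral_Ioo, G_eq_Ioo]
  · rw [intervalIntegral.integral_of_ge ht.le, setIntegral_indicator measurableSet_Ioi,
      G_eq_Ioo]
    have h1 : Ioo (0:ℝ) t = ∅ := Ioo_eq_empty (by linarith)
    have h2 : Ioc t 0 ∩ Ioi 0 = (∅ : Set ℝ) := by
      ext z
      simp only [mem_inter_iff, mem_Ioc, mem_Ioi, mem_empty_iff_false, iff_false, not_and]
      rintro ⟨_, hz⟩; linarith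
    rw [h1, h2]
    simp

lemma G_continuous {h : ℝ → ℝ} (hint : IntegrableOn h (Ioi 0)) : Continuous (G h) := by
  have hc := intervalIntegral.continuous_primitive
    (fun a b => (indInt hint).intervalIntegrable) 0
  exact hc.congr fun t => (G_eq_interval h hint t).symm

lemma G_nonneg {h : ℝ → ℝ} (hnn : ∀ x ∈ Ioi (0:ℝ), 0 ≤ h x) (t : ℝ) : 0 ≤ G h t := by
  rw [G_eq_Ioo]
  exact setIntegral_nonneg measurableSet_Ioo fun z hz => hnn z (Ioo_subset_Ioi_self hz)

lemma G_le_one {h : ℝ → ℝ} (hnn : ∀ x ∈ Ioi (0:ℝ), 0 ≤ h x)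
    (hint : IntegrableOn h (Ioi 0)) (hmass : ∫ x in Ioi (0:ℝ), h x = 1) (t : ℝ) :
    G h t ≤ 1 := by
  have h1 : (∫ z, (Ioi (0:ℝ)).indicator h z) = 1 := by
    rw [integral_indicator measurableSet_Ioi, hmass]
  rw [← h1]
  refine setIntegral_le_integral (indInt hint) ?_
  refine Eventually.of_forall fun z => ?_
  exact indicator_nonneg (fun y hy => hnn y hy) z

lemma G_nonpos_zero {h : ℝ → ℝ} {t : ℝ} (ht : t ≤ 0) : G h t = 0 := by
  rw [G_eq_Ioo, Ioo_eq_empty (by intro hlt; exact absurd (hlt.trans_le ht) (lt_irrefl 0))]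
  simp

lemma tail_eq {h : ℝ → ℝ} (hint : IntegrableOn h (Ioi 0))
    (hmass : ∫ x in Ioi (0:ℝ), h x = 1) {t : ℝ} (ht : 0 < t) :
    (∫ z in Ioi t, h z) = 1 - G h t := by
  have hsplit : (∫ z in Ioc 0 t, h z) + ∫ z in Ioi t, h z = ∫ z in Ioi (0:ℝ), h z := by
    rw [← setIntegral_union (Ioc_disjoint_Ioi le_rfl) measurableSet_Ioi
      (hint.mono_set Ioc_subset_Ioi_self) (hint.mono_set (Ioi_subset_Ioi ht.le)),
      Ioc_union_Ioi_eq_Ioi ht.le]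
  rw [hmass] at hsplit
  have hG : G h t = ∫ z in Ioc 0 t, h z := by
    rw [G_eq_Ioo, ← integral_Ioc_eq_integral_Ioo]
  linarith

lemma fubini_key {f g : ℝ → ℝ} (hf : Integrable f) (hg : Integrable g) (x : ℝ) :
    (∫ y, f y * ∫ z in Iio (x - y), g z) = ∫ z, g z * ∫ y in Iio (x - z), f y := by
  set F : ℝ → ℝ → ℝ := fun y z => f y * g z * (Iio x).indicator 1 (y + z) with hF
  have hind_meas : AEStronglyMeasurable (fun p : ℝ × ℝ => (Iio x).indicator (1:ℝ→ℝ) (p.1 + p.2))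
      (volume.prod volume) :=
    ((measurable_one.indicator measurableSet_Iio).comp
      (measurable_fst.add measurable_snd)).aestronglyMeasurable
  have hFint : Integrable (Function.uncurry F) (volume.prod volume) := by
    have hbase : Integrable (fun p : ℝ × ℝ => f p.1 * g p.2) (volume.prod volume) :=
      hf.mul_prod hg
    have := hbase.bdd_mul hind_meas (c := 1) (Eventually.of_forall fun p => by
      by_cases hp : p.1 + p.2 ∈ Iio x <;>
        simp [Set.indicator_apply, hp])
    refine this.congr (Eventually.of_forall fun p => ?_)
    simp only [Function.uncurry, hF]
    ring
  have hswap := integral_integral_swap hFint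
  have hleft : ∀ y : ℝ, (∫ z, F y z) = f y * ∫ z in Iio (x - y), g z := by
    intro y
    have h1 : ∀ z : ℝ, F y z = f y * (Iio (x - y)).indicator g z := by
      intro z
      simp only [hF, Set.indicator_apply, mem_Iio]
      by_cases hz : z < x - y
      · rw [if_pos (show y + z < x by linarith), if_pos hz, Pi.one_apply]; ring
      · rw [if_neg (fun h => hz (by linarith)), if_neg hz]; ring
    simp_rw [h1]
    rw [integral_const_mul, integral_indicator measurableSet_Iio]
  have hright : ∀ z : ℝ, (∫ y, F y z) = g z * ∫ y in Iio (x - z), f y := by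
    intro z
    have h1 : ∀ y : ℝ, F y z = g z * (Iio (x - z)).indicator f y := by
      intro y
      simp only [hF, Set.indicator_apply, mem_Iio]
      by_cases hy : y < x - z
      · rw [if_pos (show y + z < x by linarith), if_pos hy, Pi.one_apply]; ring
      · rw [if_neg (fun h => hy (by linarith)), if_neg hy]; ring
    simp_rw [h1]
    rw [integral_const_mul, integral_indicator measurableSet_Iio]
  calc (∫ y, f y * ∫ z in Iio (x - y), g z) = ∫ y, ∫ z, F y z := by
        simp_rw [hleft]
    _ = ∫ z, ∫ y, F y z := hswap
    _ = ∫ z, g z * ∫ y in Iio (x - z), f y := by simp_rw [hright]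

end ConvDiffAux

open ConvDiffAux in
theorem convolution_difference_identity
    (h₁ h₂ : ℝ → ℝ)
    (h₁nonneg : ∀ x ∈ Ioi (0:ℝ), 0 ≤ h₁ x) (h₂nonneg : ∀ x ∈ Ioi (0:ℝ), 0 ≤ h₂ x)
    (h₁int : IntegrableOn h₁ (Ioi 0)) (h₂int : IntegrableOn h₂ (Ioi 0))
    (h₁mass : ∫ x in Ioi (0:ℝ), h₁ x = 1) (h₂mass : ∫ x in Ioi (0:ℝ), h₂ x = 1)
    (H₁ H₂ E : ℝ → ℝ)
    (hH₁ : ∀ x, H₁ x = ∫ y in Ioi x, h₁ y) (hH₂ : ∀ x, H₂ x = ∫ y in Ioi x, h₂ y)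
    (hE : ∀ x, E x = H₁ x - H₂ x) :
    ∀ x ∈ Ioi (0:ℝ),
      (∫ y in Ioo (0:ℝ) x, h₁ y * H₁ (x - y))
        - (∫ y in Ioo (0:ℝ) x, h₂ y * H₂ (x - y))
      = (∫ y in Ioo (0:ℝ) x, (h₁ y + h₂ y) * E (x - y)) - E x := by
  intro x hx
  rw [mem_Ioi] at hx
  -- H in terms of G on positive arguments
  have hHG₁ : ∀ t : ℝ, 0 < t → H₁ t = 1 - G h₁ t := fun t ht => by
    rw [hH₁, tail_eq h₁int h₁mass ht]
  have hHG₂ : ∀ t : ℝ, 0 < t → H₂ t = 1 - G h₂ t := fun t ht => by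
    rw [hH₂, tail_eq h₂int h₂mass ht]
  -- integrability of the pieces on Ioo 0 x
  have I₁ : IntegrableOn h₁ (Ioo 0 x) := h₁int.mono_set Ioo_subset_Ioi_self
  have I₂ : IntegrableOn h₂ (Ioo 0 x) := h₂int.mono_set Ioo_subset_Ioi_self
  have hGmul : ∀ (h g : ℝ → ℝ), IntegrableOn h (Ioo 0 x) → IntegrableOn g (Ioi 0) →
      (∀ x ∈ Ioi (0:ℝ), 0 ≤ g x) → (∫ y in Ioi (0:ℝ), g y = 1) →
      IntegrableOn (fun y => h y * G g (x - y)) (Ioo 0 x) := by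
    intro h g hh hg hgnn hgm
    have hc : Continuous fun y : ℝ => G g (x - y) :=
      (G_continuous hg).comp (continuous_const.sub continuous_id)
    have := hh.bdd_mul hc.aestronglyMeasurable (c := 1) (Eventually.of_forall fun y => by
      rw [Real.norm_eq_abs, abs_le]
      exact ⟨by linarith [G_nonneg hgnn (x - y)], G_le_one hgnn hg hgm (x - y)⟩)
    exact this.congr (Eventually.of_forall fun y => mul_comm _ _)
  have I₁₁ := hGmul h₁ h₁ I₁ h₁int h₁nonneg h₁mass
  have I₁₂ := hGmul h₁ h₂ I₁ h₂int h₂nonneg h₂mass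
  have I₂₁ := hGmul h₂ h₁ I₂ h₁int h₁nonneg h₁mass
  have I₂₂ := hGmul h₂ h₂ I₂ h₂int h₂nonneg h₂mass
  -- mass on Ioo 0 x
  have hm₁ : (∫ y in Ioo (0:ℝ) x, h₁ y) = G h₁ x := (G_eq_Ioo h₁ x).symm
  have hm₂ : (∫ y in Ioo (0:ℝ) x, h₂ y) = G h₂ x := (G_eq_Ioo h₂ x).symm
  -- the four convolution pieces
  set D₁₁ := ∫ y in Ioo (0:ℝ) x, h₁ y * G h₁ (x - y) with hD₁₁
  set D₁₂ := ∫ y in Ioo (0:ℝ) x, h₁ y * G h₂ (x - y) with hD₁₂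
  set D₂₁ := ∫ y in Ioo (0:ℝ) x, h₂ y * G h₁ (x - y) with hD₂₁
  set D₂₂ := ∫ y in Ioo (0:ℝ) x, h₂ y * G h₂ (x - y) with hD₂₂
  -- LHS pieces
  have hA : (∫ y in Ioo (0:ℝ) x, h₁ y * H₁ (x - y)) = G h₁ x - D₁₁ := by
    rw [setIntegral_congr_fun measurableSet_Ioo
      (g := fun y => h₁ y - h₁ y * G h₁ (x - y))
      (fun y hy => by rw [hHG₁ (x - y) (by simp at hy; linarith [hy.2])]; ring),
      integral_sub I₁ I₁₁, hm₁]
  have hB : (∫ y in Ioo (0:ℝ) x, h₂ y * H₂ (x - y)) = G h₂ x - D₂₂ := by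
    rw [setIntegral_congr_fun measurableSet_Ioo
      (g := fun y => h₂ y - h₂ y * G h₂ (x - y))
      (fun y hy => by rw [hHG₂ (x - y) (by simp at hy; linarith [hy.2])]; ring),
      integral_sub I₂ I₂₂, hm₂]
  -- RHS piece
  have hC : (∫ y in Ioo (0:ℝ) x, (h₁ y + h₂ y) * E (x - y))
      = (D₁₂ - D₁₁) + (D₂₂ - D₂₁) := by
    rw [setIntegral_congr_fun measurableSet_Ioo
      (g := fun y => (h₁ y * G h₂ (x - y) - h₁ y * G h₁ (x - y))
        + (h₂ y * G h₂ (x - y) - h₂ y * G h₁ (x - y)))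
      (fun y hy => by
        have hyx : 0 < x - y := by simp at hy; linarith [hy.2]
        rw [hE, hHG₁ (x - y) hyx, hHG₂ (x - y) hyx]; ring)]
    have Ia : IntegrableOn (fun y => h₁ y * G h₂ (x - y) - h₁ y * G h₁ (x - y)) (Ioo 0 x) :=
      I₁₂.sub I₁₁
    have Ib : IntegrableOn (fun y => h₂ y * G h₂ (x - y) - h₂ y * G h₁ (x - y)) (Ioo 0 x) :=
      I₂₂.sub I₂₁
    rw [integral_add Ia Ib, integral_sub I₁₂ I₁₁, integral_sub I₂₂ I₂₁]
  -- E x in terms of G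
  have hEx : E x = G h₂ x - G h₁ x := by
    rw [hE, hHG₁ x hx, hHG₂ x hx]; ring
  -- Fubini: D₂₁ = D₁₂
  have hDD : D₂₁ = D₁₂ := by
    have key := fubini_key (f := (Ioi (0:ℝ)).indicator h₂) (g := (Ioi (0:ℝ)).indicator h₁)
      (indInt h₂int) (indInt h₁int) x
    have hconv : ∀ (f g : ℝ → ℝ), (∀ x ∈ Ioi (0:ℝ), 0 ≤ g x) →
        (∫ y, (Ioi (0:ℝ)).indicator f y * ∫ z in Iio (x - y), (Ioi (0:ℝ)).indicator g z)
        = ∫ y in Ioo (0:ℝ) x, f y * G g (x - y) := by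
      intro f g hgnn
      have hpt : ∀ y : ℝ, (Ioi (0:ℝ)).indicator f y * G g (x - y)
          = (Ioo (0:ℝ) x).indicator (fun y => f y * G g (x - y)) y := by
        intro y
        by_cases hy : y ∈ Ioo (0:ℝ) x
        · rw [indicator_of_mem hy, indicator_of_mem (mem_Ioi.mpr hy.1)]
        · rw [indicator_of_notMem hy]
          rcases lt_or_ge 0 y with h0 | h0
          · have hxy : x ≤ y := by
              by_contra hxy
              exact hy ⟨h0, lt_of_not_ge hxy⟩
            rw [G_nonpos_zero (by linarith)]
            ring
          · rw [indicator_of_notMem (by simpa using h0)]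
            ring
      calc (∫ y, (Ioi (0:ℝ)).indicator f y * ∫ z in Iio (x - y), (Ioi (0:ℝ)).indicator g z)
          = ∫ y, (Ioo (0:ℝ) x).indicator (fun y => f y * G g (x - y)) y := by
            refine integral_congr_ae (Eventually.of_forall fun y => ?_)
            rw [← hpt y]; rfl
        _ = ∫ y in Ioo (0:ℝ) x, f y * G g (x - y) :=
            integral_indicator measurableSet_Ioo
    rw [hconv h₂ h₁ h₁nonneg, hconv h₁ h₂ h₂nonneg] at key
    exact key
  rw [hA, hB, hC, hEx]
  linarith
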